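/- Let V be a finite nonempty set of positive integers and let T be an unordered increasing tree with label set V. Define the map φ from Cayley trees with vertex set V to unordered increasing trees with label set V recursively: given a Cayley tree U, let ℓ = min V; if |V| = 1 then φ(U) is the single-vertex tree labelled ℓ; otherwise remove vertex ℓ and all incident edges from U, obtaining connected components U_1, U_2, …, and let φ(U) be the increasing tree with root labelled ℓ whose root's subtrees are φ(U_1), φ(U_2), …. Then the sum over all Cayley trees U with vertex set V satisfying φ(U) = T of the monomial ∏_{v ∈ V} k_v^{d_v(U)} equals ∏_{v ∈ V, v ≠ min V} k_{f(v)} · (Σ_{u ∈ 𝔥_T(v)} k_u), as an identity in ℚ[(k_v)_{v∈V}]. -/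

import Mathlib

open scoped Classical

/-- The root label of a tree with label set `V`, namely `min V` (junk value `0` if `V = ∅`). -/
def rootOf (V : Finset ℕ) : ℕ := V.min.untopD 0

/-- An unordered increasing tree with label set `V`, encoded by a (total) parent function
`f : ℕ → ℕ`: every non-root vertex `v ∈ V` has a father `f v ∈ V` with `f v < v`;
as a normalization, `f` is the identity on the root and outside `V`. -/
def IsIncTree (V : Finset ℕ) (f : ℕ → ℕ) : Prop :=
  (∀ v ∈ V, if v = rootOf V then f v = v else f v ∈ V ∧ f v < v) ∧ ∀ v, v ∉ V → f v = v

/-- The hook of a vertex `v` in the tree with label set `V` and parent function `f`: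
the set of `u ∈ V` consisting of `v` and its descendants (`u` is a descendant of `v` if
iterating `f` starting from `u` reaches `v`). -/
noncomputable def hookN (V : Finset ℕ) (f : ℕ → ℕ) (v : ℕ) : Finset ℕ :=
  V.filter fun u => ∃ n, f^[n] u = v

/-- The weight of an unordered increasing tree with label set `V` and parent function `f`:
`wt(T) = ∏_{v ∈ V, v ≠ min V} k_{f(v)} · ((Σ_{u ∈ 𝔥_T(v)} k_u) − h_T(v) + 1)`,
in the polynomial ring `ℚ[(k_v)]` (the variable `v : ℕ` is `k_v`). -/
noncomputable def wtN (V : Finset ℕ) (f : ℕ → ℕ) : MvPolynomial ℕ ℚ :=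
  ∏ v ∈ V.erase (rootOf V),
    MvPolynomial.X (f v) *
      ((∑ u ∈ hookN V f v, MvPolynomial.X u) - ((hookN V f v).card : MvPolynomial ℕ ℚ) + 1)

/-- `ReachIn G S a b`: there is a walk from `a` to `b` in the graph `G` all of whose
vertices lie in `S` (except possibly `a` itself when the walk is trivial). -/
def ReachIn (G : SimpleGraph ℕ) (S : Finset ℕ) : ℕ → ℕ → Prop :=
  Relation.ReflTransGen fun a b => G.Adj a b ∧ a ∈ S ∧ b ∈ S

/-- A Cayley tree with vertex set `V`: a simple graph all of whose edges lie inside `V`,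
which is acyclic and in which any two vertices of `V` are connected (within `V`). -/
def IsCayleyOn (V : Finset ℕ) (G : SimpleGraph ℕ) : Prop :=
  (∀ a b, G.Adj a b → a ∈ V ∧ b ∈ V) ∧ G.IsAcyclic ∧ ∀ a ∈ V, ∀ b ∈ V, ReachIn G V a b

/-- The degree of the vertex `v` in a Cayley tree with vertex set `V`. -/
noncomputable def degIn (V : Finset ℕ) (G : SimpleGraph ℕ) (v : ℕ) : ℕ :=
  (V.filter fun u => G.Adj v u).card

/-- The parent function of the unordered increasing tree `φ(U)` associated to a Cayley
tree `U` with vertex set `V`, defined recursively: let `ℓ = min V`; remove `ℓ` from `U`;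
if `v` is the minimum of its connected component `C` of `U − ℓ` then its father is `ℓ`
(it is a son of the root), and otherwise its father is its father in `φ(U|_C)`.
(The value at the root of `V`, or for `V = ∅`, is a junk value.) -/
noncomputable def phiF (G : SimpleGraph ℕ) (V : Finset ℕ) (v : ℕ) : ℕ :=
  if hV : V = ∅ then 0
  else
    if rootOf ((V.erase (rootOf V)).filter fun u => ReachIn G (V.erase (rootOf V)) v u) = v
    then rootOf V
    else phiF G ((V.erase (rootOf V)).filter fun u => ReachIn G (V.erase (rootOf V)) v u) v
termination_by V.card
decreasing_by
  have hVne : V.Nonempty := Finset.nonempty_iff_ne_empty.mpr hV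
  have hmem : rootOf V ∈ V := by
    obtain ⟨a, ha⟩ := Finset.min_of_nonempty hVne
    have h1 : rootOf V = a := by
      unfold rootOf
      rw [ha]
      exact WithTop.untopD_coe 0 a
    rw [h1]
    exact Finset.mem_of_min ha
  calc ((V.erase (rootOf V)).filter fun u => ReachIn G (V.erase (rootOf V)) v u).card
      ≤ (V.erase (rootOf V)).card := Finset.card_le_card (Finset.filter_subset _ _)
    _ < V.card := Finset.card_erase_lt_of_mem hmem


set_option linter.unusedSectionVars false
set_option linter.unusedVariables false

section Basics
variable {V : Finset ℕ} {f : ℕ → ℕ}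

lemma rootOf_eq {S : Finset ℕ} {w : ℕ} (hw : w ∈ S) (h : ∀ u ∈ S, w ≤ u) : rootOf S = w := by
  have hmin : S.min = (w : WithTop ℕ) :=
    le_antisymm (Finset.min_le hw) (Finset.le_min (fun b hb => WithTop.coe_le_coe.mpr (h b (by exact_mod_cast hb))))
  unfold rootOf; rw [hmin]; rfl

lemma rootOf_mem {S : Finset ℕ} (hS : S.Nonempty) : rootOf S ∈ S := by
  obtain ⟨a, ha⟩ := Finset.min_of_nonempty hS
  have : rootOf S = a := by unfold rootOf; rw [ha]; rfl
  rw [this]; exact Finset.mem_of_min ha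

lemma rootOf_le {S : Finset ℕ} {v : ℕ} (hv : v ∈ S) : rootOf S ≤ v := by
  obtain ⟨a, ha⟩ := Finset.min_of_nonempty ⟨v, hv⟩
  have h1 : rootOf S = a := by unfold rootOf; rw [ha]; rfl
  rw [h1]
  have h2 : S.min ≤ (v : WithTop ℕ) := Finset.min_le hv
  rw [ha] at h2
  exact WithTop.coe_le_coe.mp h2

variable (hf : IsIncTree V f)
include hf

lemma f_mem {v : ℕ} (hv : v ∈ V) : f v ∈ V := by
  have := hf.1 v hv
  split at this
  · rw [this]; exact hv
  · exact this.1

lemma f_lt {v : ℕ} (hv : v ∈ V) (hvr : v ≠ rootOf V) : f v < v := by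
  have := hf.1 v hv
  rw [if_neg hvr] at this
  exact this.2

lemma f_le : ∀ x, f x ≤ x := by
  intro x
  by_cases hx : x ∈ V
  · have := hf.1 x hx
    split at this
    · omega
    · omega
  · rw [hf.2 x hx]

lemma iter_le (n : ℕ) (x : ℕ) : f^[n] x ≤ x := by
  induction n generalizing x with
  | zero => simp
  | succ n ih =>
    rw [Function.iterate_succ_apply]
    exact le_trans (ih (f x)) (f_le hf x)

lemma iter_mem {n : ℕ} {x : ℕ} (hx : x ∈ V) : f^[n] x ∈ V := by
  induction n generalizing x with
  | zero => simpa
  | succ n ih =>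
    rw [Function.iterate_succ_apply]
    exact ih (f_mem hf hx)

lemma mem_hook_self {v : ℕ} (hv : v ∈ V) : v ∈ hookN V f v := by
  simp [hookN, hv]; exact ⟨0, rfl⟩

lemma hook_subset {v : ℕ} : hookN V f v ⊆ V := Finset.filter_subset _ _

lemma le_of_mem_hook {u v : ℕ} (hu : u ∈ hookN V f v) : v ≤ u := by
  simp only [hookN, Finset.mem_filter] at hu
  obtain ⟨-, n, rfl⟩ := hu
  exact iter_le hf n u

lemma rootOf_hook {v : ℕ} (hv : v ∈ V) : rootOf (hookN V f v) = v :=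
  rootOf_eq (mem_hook_self hf hv) (fun _ hu => le_of_mem_hook hf hu)

lemma hook_trans {u v w : ℕ} (hu : u ∈ hookN V f v) (hv : v ∈ hookN V f w) :
    u ∈ hookN V f w := by
  simp only [hookN, Finset.mem_filter] at *
  obtain ⟨hu1, n, rfl⟩ := hu
  obtain ⟨hv1, m, hm⟩ := hv
  exact ⟨hu1, m + n, by rw [Function.iterate_add_apply]; exact hm⟩

lemma parent_mem_hook {u v : ℕ} (hu : u ∈ hookN V f v) (huv : u ≠ v) :
    f u ∈ hookN V f v := by
  simp only [hookN, Finset.mem_filter] at *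
  obtain ⟨hu1, n, hn⟩ := hu
  cases n with
  | zero => exact absurd hn huv
  | succ n =>
    refine ⟨f_mem hf hu1, n, ?_⟩
    rw [Function.iterate_succ_apply] at hn
    exact hn

lemma hook_chain {u v₁ v₂ : ℕ} (h1 : u ∈ hookN V f v₁) (h2 : u ∈ hookN V f v₂) :
    v₁ ∈ hookN V f v₂ ∨ v₂ ∈ hookN V f v₁ := by
  simp only [hookN, Finset.mem_filter] at *
  obtain ⟨hu1, n, hn⟩ := h1
  obtain ⟨-, m, hm⟩ := h2
  rcases le_total n m with h | h
  · left
    refine ⟨hn ▸ iter_mem hf hu1, m - n, ?_⟩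
    rw [← hn, ← Function.iterate_add_apply, Nat.sub_add_cancel h]; exact hm
  · right
    refine ⟨hm ▸ iter_mem hf hu1, n - m, ?_⟩
    rw [← hm, ← Function.iterate_add_apply, Nat.sub_add_cancel h]; exact hn

end Basics

section MoreHooks
variable {V : Finset ℕ} {f : ℕ → ℕ} (hf : IsIncTree V f)
include hf

lemma reaches_root : ∀ u, u ∈ V → ∃ n, f^[n] u = rootOf V := by
  intro u
  induction u using Nat.strong_induction_on with
  | _ u ih =>
    intro hu
    by_cases h : u = rootOf V
    · exact ⟨0, h⟩
    · obtain ⟨n, hn⟩ := ih (f u) (f_lt hf hu h) (f_mem hf hu)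
      exact ⟨n + 1, by rw [Function.iterate_add_apply]; simpa⟩

lemma hook_root_eq (hV : V.Nonempty) : hookN V f (rootOf V) = V := by
  apply Finset.Subset.antisymm (hook_subset hf)
  intro u hu
  simp only [hookN, Finset.mem_filter]
  exact ⟨hu, reaches_root hf u hu⟩

omit hf in
lemma mem_of_mem_hook {u v : ℕ} (hu : u ∈ hookN V f v) : u ∈ V :=
  (Finset.mem_filter.mp hu).1

lemma hook_mem_V {u v : ℕ} (hu : u ∈ hookN V f v) : v ∈ V := by
  simp only [hookN, Finset.mem_filter] at hu
  obtain ⟨h1, n, rfl⟩ := hu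
  exact iter_mem hf h1

/-- key: a strict member of a hook has its parent in the hook, hence parent ≥ hook root -/
lemma parent_ge {u v : ℕ} (hu : u ∈ hookN V f v) (huv : u ≠ v) : v ≤ f u :=
  le_of_mem_hook hf (parent_mem_hook hf hu huv)

/-- every strict member of hook(w) lies in the hook of a son of w -/
lemma exists_son_aux {w : ℕ} : ∀ n (u : ℕ), u ∈ V → u ≠ w → f^[n] u = w →
    ∃ v, v ∈ V ∧ v ≠ rootOf V ∧ f v = w ∧ u ∈ hookN V f v := by
  intro n
  induction n with
  | zero => intro u _ huw hn; exact absurd hn huw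
  | succ n ih =>
    intro u huV huw hn
    rw [Function.iterate_succ_apply] at hn
    by_cases h : f u = w
    · refine ⟨u, huV, ?_, h, mem_hook_self hf huV⟩
      intro hr
      have : f u = u := by
        have := hf.1 u huV; rw [if_pos hr] at this; exact this
      rw [this] at h; exact huw h
    · have hfu : f u ∈ V := f_mem hf huV
      obtain ⟨v, hv1, hv2, hv3, hv4⟩ := ih (f u) hfu h hn
      refine ⟨v, hv1, hv2, hv3, ?_⟩
      simp only [hookN, Finset.mem_filter] at hv4 ⊢
      obtain ⟨-, m, hm⟩ := hv4
      exact ⟨huV, m + 1, by rw [Function.iterate_add_apply]; simpa⟩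

lemma exists_son {u w : ℕ} (hu : u ∈ hookN V f w) (huw : u ≠ w) :
    ∃ v, v ∈ V ∧ v ≠ rootOf V ∧ f v = w ∧ u ∈ hookN V f v := by
  simp only [hookN, Finset.mem_filter] at hu
  obtain ⟨huV, n, hn⟩ := hu
  exact exists_son_aux hf n u huV huw hn

/-- hooks of distinct sons of the same vertex are disjoint -/
lemma son_hooks_disjoint {v₁ v₂ u : ℕ} (h1 : v₁ ∈ V) (h2 : v₂ ∈ V)
    (hr1 : v₁ ≠ rootOf V) (hr2 : v₂ ≠ rootOf V) (hff : f v₁ = f v₂)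
    (hu1 : u ∈ hookN V f v₁) (hu2 : u ∈ hookN V f v₂) : v₁ = v₂ := by
  by_contra hne
  rcases hook_chain hf hu1 hu2 with h | h
  · have := parent_ge hf h hne
    rw [hff] at this
    exact absurd (f_lt hf h2 hr2) (not_lt.mpr this)
  · have := parent_ge hf h (Ne.symm hne)
    rw [← hff] at this
    exact absurd (f_lt hf h1 hr1) (not_lt.mpr this)

/-- general: two sons-of-the-same-father uniqueness, from membership of a common element
where fathers both equal w -/
lemma son_unique {w v₁ v₂ u : ℕ} (hs1 : v₁ ∈ V ∧ v₁ ≠ rootOf V ∧ f v₁ = w)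
    (hs2 : v₂ ∈ V ∧ v₂ ≠ rootOf V ∧ f v₂ = w)
    (hu1 : u ∈ hookN V f v₁) (hu2 : u ∈ hookN V f v₂) : v₁ = v₂ :=
  son_hooks_disjoint hf hs1.1 hs2.1 hs1.2.1 hs2.2.1 (hs1.2.2.trans hs2.2.2.symm) hu1 hu2

lemma hook_restrict {u v : ℕ} (hu : u ∈ hookN V f v) :
    hookN (hookN V f v) f u = hookN V f u := by
  ext x
  simp only [hookN, Finset.mem_filter] at *
  constructor
  · rintro ⟨⟨hx, hxv⟩, hxu⟩; exact ⟨hx, hxu⟩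
  · rintro ⟨hx, n, rfl⟩
    obtain ⟨-, m, hm⟩ := hu
    exact ⟨⟨hx, m + n, by rw [Function.iterate_add_apply, hm]⟩, n, rfl⟩

/-- a son is a member of its father's hook -/
lemma son_mem_hook {v w : ℕ} (hv : v ∈ V) (hfv : f v = w) : v ∈ hookN V f w := by
  simp only [hookN, Finset.mem_filter]
  exact ⟨hv, 1, by simpa⟩

lemma hook_sub_of_son {v w : ℕ} (hv : v ∈ V) (hfv : f v = w) :
    hookN V f v ⊆ hookN V f w := fun x hx => hook_trans hf hx (son_mem_hook hf hv hfv)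

lemma son_gt {v w : ℕ} (hv : v ∈ V) (hvr : v ≠ rootOf V) (hfv : f v = w) : w < v := by
  rw [← hfv]; exact f_lt hf hv hvr

lemma hook_card_lt {v w : ℕ} (hw : w ∈ V) (hv : v ∈ V) (hvr : v ≠ rootOf V) (hfv : f v = w) :
    (hookN V f v).card < (hookN V f w).card := by
  apply Finset.card_lt_card
  refine ⟨hook_sub_of_son hf hv hfv, fun hsub => ?_⟩
  have hwmem : w ∈ hookN V f v := hsub (mem_hook_self hf hw)
  have := le_of_mem_hook hf hwmem
  have := son_gt hf hv hvr hfv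
  omega

/-- a strict hook member is not the root of V when... actually: any member of hook v with v ≠ s
  where s ∈ hook... : elements of hook v other than relations. ws -/
lemma hook_not_mem_self_parent {v : ℕ} (hv : v ∈ V) (hvr : v ≠ rootOf V) :
    f v ∉ hookN V f v := by
  intro h
  have := le_of_mem_hook hf h
  have := f_lt hf hv hvr
  omega

end MoreHooks

section ReachInLemmas
variable {G : SimpleGraph ℕ} {S S' : Finset ℕ}

lemma ReachIn.mono (hSS : S ⊆ S') {a b : ℕ} (h : ReachIn G S a b) : ReachIn G S' a b := by
  induction h with
  | refl => exact Relation.ReflTransGen.refl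
  | tail _ h ih => exact ih.tail ⟨h.1, hSS h.2.1, hSS h.2.2⟩

lemma ReachIn.symm {a b : ℕ} (h : ReachIn G S a b) : ReachIn G S b a := by
  induction h with
  | refl => exact Relation.ReflTransGen.refl
  | tail _ h ih => exact Relation.ReflTransGen.head ⟨h.1.symm, h.2.2, h.2.1⟩ ih

lemma ReachIn.trans {a b c : ℕ} (h1 : ReachIn G S a b) (h2 : ReachIn G S b c) :
    ReachIn G S a c := Relation.ReflTransGen.trans h1 h2

lemma ReachIn.single {a b : ℕ} (h : G.Adj a b) (ha : a ∈ S) (hb : b ∈ S) : ReachIn G S a b :=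
  Relation.ReflTransGen.single ⟨h, ha, hb⟩

/-- extract a walk with support inside S from a ReachIn -/
lemma ReachIn.exists_walk {a b : ℕ} (h : ReachIn G S a b) (ha : a ∈ S) :
    ∃ w : G.Walk a b, ∀ x ∈ w.support, x ∈ S := by
  induction h with
  | refl => exact ⟨SimpleGraph.Walk.nil, by simpa⟩
  | tail _ h ih =>
    obtain ⟨w, hw⟩ := ih
    refine ⟨w.concat h.1, ?_⟩
    intro x hx
    rw [SimpleGraph.Walk.support_concat, List.mem_append] at hx
    rcases hx with hx | hx
    · exact hw x hx
    · rw [List.mem_singleton.mp hx]; exact h.2.2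

end ReachInLemmas

/-- The Cayley tree built from an increasing tree `(V, f)` and a choice function `c`
assigning to each non-root vertex `v` an element of its hook: edges `{f v, c v}`. -/
noncomputable def mkG (V : Finset ℕ) (f c : ℕ → ℕ) : SimpleGraph ℕ :=
  SimpleGraph.fromEdgeSet {e | ∃ v ∈ V.erase (rootOf V), e = s(f v, c v)}

section MkG
variable {V : Finset ℕ} {f c : ℕ → ℕ} (hf : IsIncTree V f)
  (hc : ∀ v ∈ V.erase (rootOf V), c v ∈ hookN V f v)
include hf hc

lemma mk_f_lt_c {v : ℕ} (hv : v ∈ V.erase (rootOf V)) : f v < c v := by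
  obtain ⟨hvr, hvV⟩ := Finset.mem_erase.mp hv
  exact lt_of_lt_of_le (f_lt hf hvV hvr) (le_of_mem_hook hf (hc v hv))

lemma mkG_adj {a b : ℕ} :
    (mkG V f c).Adj a b ↔ ∃ v ∈ V.erase (rootOf V), s(a, b) = s(f v, c v) := by
  rw [mkG, SimpleGraph.fromEdgeSet_adj]
  constructor
  · rintro ⟨⟨v, hv, he⟩, -⟩; exact ⟨v, hv, he⟩
  · rintro ⟨v, hv, he⟩
    refine ⟨⟨v, hv, he⟩, ?_⟩
    intro hab
    rw [hab, Sym2.eq_iff] at he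
    have := mk_f_lt_c hf hc hv
    omega

lemma mkG_edge_cases {a b v : ℕ} (hv : v ∈ V.erase (rootOf V))
    (he : s(a, b) = s(f v, c v)) :
    (a = f v ∧ b = c v) ∨ (a = c v ∧ b = f v) := Sym2.eq_iff.mp he

/-- the labelling of edges is injective -/
lemma mkG_edge_inj {v₁ v₂ : ℕ} (h1 : v₁ ∈ V.erase (rootOf V)) (h2 : v₂ ∈ V.erase (rootOf V))
    (he : s(f v₁, c v₁) = s(f v₂, c v₂)) : v₁ = v₂ := by
  obtain ⟨hr1, hV1⟩ := Finset.mem_erase.mp h1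
  obtain ⟨hr2, hV2⟩ := Finset.mem_erase.mp h2
  have l1 := mk_f_lt_c hf hc h1
  have l2 := mk_f_lt_c hf hc h2
  rcases Sym2.eq_iff.mp he with ⟨hef, hec⟩ | ⟨hef, hec⟩
  · -- f v₁ = f v₂, c v₁ = c v₂
    exact son_hooks_disjoint hf hV1 hV2 hr1 hr2 hef (hc v₁ h1) (hec ▸ hc v₂ h2)
  · omega

lemma mkG_adj_mem {a b : ℕ} (h : (mkG V f c).Adj a b) : a ∈ V ∧ b ∈ V := by
  obtain ⟨v, hv, he⟩ := (mkG_adj hf hc).mp h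
  obtain ⟨hvr, hvV⟩ := Finset.mem_erase.mp hv
  have hfv : f v ∈ V := f_mem hf hvV
  have hcv : c v ∈ V := mem_of_mem_hook (hc v hv)
  rcases mkG_edge_cases hf hc hv he with ⟨rfl, rfl⟩ | ⟨rfl, rfl⟩ <;> exact ⟨by assumption, by assumption⟩

/-- an edge of `mkG` with both endpoints in `hook s` away from `s` lies in the hook
of a single son of `s`. -/
lemma mkG_edge_in_son {s a b : ℕ} (hs : s ∈ V) (h : (mkG V f c).Adj a b)
    (ha : a ∈ hookN V f s) (has : a ≠ s) (hb : b ∈ hookN V f s) (hbs : b ≠ s) :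
    ∃ t, t ∈ V ∧ t ≠ rootOf V ∧ f t = s ∧ a ∈ hookN V f t ∧ b ∈ hookN V f t := by
  obtain ⟨v, hv, he⟩ := (mkG_adj hf hc).mp h
  obtain ⟨hvr, hvV⟩ := Finset.mem_erase.mp hv
  rcases mkG_edge_cases hf hc hv he with ⟨rfl, rfl⟩ | ⟨rfl, rfl⟩
  · -- case a = f v, b = c v
    rcases hook_chain hf (hc v hv) hb with hvs | hsv
    · have hvne : v ≠ s := by
        rintro rfl
        have h2 : f v < v := f_lt hf hvV hvr
        have h3 : v ≤ f v := le_of_mem_hook hf ha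
        omega
      obtain ⟨t, ht1, ht2, ht3, ht4⟩ := exists_son hf hvs hvne
      have hvt : v ≠ t := by rintro rfl; exact has ht3
      refine ⟨t, ht1, ht2, ht3, parent_mem_hook hf ht4 hvt, hook_trans hf (hc v hv) ht4⟩
    · have h1 : v ≤ s := le_of_mem_hook hf hsv
      have h2 : f v < v := f_lt hf hvV hvr
      have h3 : s ≤ f v := le_of_mem_hook hf ha
      omega
  · -- case a = c v, b = f v
    rcases hook_chain hf (hc v hv) ha with hvs | hsv
    · have hvne : v ≠ s := by
        rintro rfl
        have h2 : f v < v := f_lt hf hvV hvr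
        have h3 : v ≤ f v := le_of_mem_hook hf hb
        omega
      obtain ⟨t, ht1, ht2, ht3, ht4⟩ := exists_son hf hvs hvne
      have hvt : v ≠ t := by rintro rfl; exact hbs ht3
      refine ⟨t, ht1, ht2, ht3, hook_trans hf (hc v hv) ht4, parent_mem_hook hf ht4 hvt⟩
    · have h1 : v ≤ s := le_of_mem_hook hf hsv
      have h2 : f v < v := f_lt hf hvV hvr
      have h3 : s ≤ f v := le_of_mem_hook hf hb
      omega

/-- an edge of `mkG` at `s` into `hook s` goes to `c t` for a son `t` of `s`. -/
lemma mkG_edge_at_root {s b : ℕ} (hs : s ∈ V) (h : (mkG V f c).Adj s b)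
    (hb : b ∈ hookN V f s) :
    ∃ t, t ∈ V ∧ t ≠ rootOf V ∧ f t = s ∧ b = c t := by
  obtain ⟨v, hv, he⟩ := (mkG_adj hf hc).mp h
  obtain ⟨hvr, hvV⟩ := Finset.mem_erase.mp hv
  rcases mkG_edge_cases hf hc hv he with ⟨hsf, rfl⟩ | ⟨hsc, rfl⟩
  · exact ⟨v, hvV, hvr, hsf.symm, rfl⟩
  · -- s = c v: then b = f v < v ≤ s ≤ b, contradiction
    have h1 : v ≤ s := hsc ▸ le_of_mem_hook hf (hc v hv)
    have h2 : f v < v := f_lt hf hvV hvr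
    have h3 : s ≤ f v := le_of_mem_hook hf hb
    omega

end MkG

section MkGConn
variable {V : Finset ℕ} {f c : ℕ → ℕ} (hf : IsIncTree V f)
  (hc : ∀ v ∈ V.erase (rootOf V), c v ∈ hookN V f v)
include hf hc

lemma mkG_conn : ∀ n, ∀ s ∈ V, (hookN V f s).card ≤ n →
    ∀ a ∈ hookN V f s, ReachIn (mkG V f c) (hookN V f s) a s := by
  intro n
  induction n with
  | zero =>
    intro s hs hcard
    have := Finset.card_pos.mpr ⟨s, mem_hook_self hf hs⟩
    omega
  | succ n ih =>
    intro s hs hcard a ha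
    by_cases has : a = s
    · subst has; exact Relation.ReflTransGen.refl
    · obtain ⟨t, ht1, ht2, ht3, ht4⟩ := exists_son hf ha has
      have hcardt : (hookN V f t).card ≤ n := by
        have := hook_card_lt hf hs ht1 ht2 ht3
        omega
      have hsub : hookN V f t ⊆ hookN V f s := hook_sub_of_son hf ht1 ht3
      have htmem : t ∈ V.erase (rootOf V) := Finset.mem_erase.mpr ⟨ht2, ht1⟩
      have h1 : ReachIn (mkG V f c) (hookN V f t) a t := ih t ht1 hcardt a ht4
      have h2 : ReachIn (mkG V f c) (hookN V f t) (c t) t :=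
        ih t ht1 hcardt (c t) (hc t htmem)
      have h3 : ReachIn (mkG V f c) (hookN V f s) a (c t) :=
        (h1.trans h2.symm).mono hsub
      refine h3.tail ⟨?_, hsub (hc t htmem), mem_hook_self hf hs⟩
      rw [mkG_adj hf hc]
      exact ⟨t, htmem, by rw [ht3, Sym2.eq_swap]⟩

lemma mkG_comp {s v t : ℕ} (hs : s ∈ V) (hv : v ∈ hookN V f s) (hvs : v ≠ s)
    (ht1 : t ∈ V) (ht2 : t ≠ rootOf V) (ht3 : f t = s) (ht4 : v ∈ hookN V f t) :
    ((hookN V f s).erase s).filter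
      (fun u => ReachIn (mkG V f c) ((hookN V f s).erase s) v u) = hookN V f t := by
  have hsub : hookN V f t ⊆ (hookN V f s).erase s := by
    intro x hx
    refine Finset.mem_erase.mpr ⟨?_, hook_sub_of_son hf ht1 ht3 hx⟩
    have h1 : t ≤ x := le_of_mem_hook hf hx
    have h2 : s < t := son_gt hf ht1 ht2 ht3
    omega
  ext u
  simp only [Finset.mem_filter]
  constructor
  · rintro ⟨hu, hreach⟩
    clear hu
    induction hreach with
    | refl => exact ht4
    | tail hr hstep ih =>
      rename_i x u'
      obtain ⟨hadj, hx, hu'⟩ := hstep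
      obtain ⟨hxs, hxh⟩ := Finset.mem_erase.mp hx
      obtain ⟨hu's, hu'h⟩ := Finset.mem_erase.mp hu'
      obtain ⟨t', ht'1, ht'2, ht'3, hxt', hu't'⟩ :=
        mkG_edge_in_son hf hc hs hadj hxh hxs hu'h hu's
      have : t = t' := son_unique hf ⟨ht1, ht2, ht3⟩ ⟨ht'1, ht'2, ht'3⟩ ih hxt'
      rw [this]; exact hu't'
  · intro hu
    refine ⟨hsub hu, ?_⟩
    have hcard : (hookN V f t).card ≤ (hookN V f t).card := le_refl _
    have h1 := mkG_conn hf hc _ t ht1 hcard v ht4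
    have h2 := mkG_conn hf hc _ t ht1 hcard u hu
    exact (h1.trans h2.symm).mono hsub

omit hc in
lemma hook_ne_empty {s : ℕ} (hs : s ∈ V) : hookN V f s ≠ ∅ :=
  Finset.nonempty_iff_ne_empty.mp ⟨s, mem_hook_self hf hs⟩

lemma mkG_phi : ∀ n, ∀ s ∈ V, (hookN V f s).card ≤ n →
    ∀ v ∈ hookN V f s, v ≠ s → phiF (mkG V f c) (hookN V f s) v = f v := by
  intro n
  induction n with
  | zero =>
    intro s hs hcard
    have := Finset.card_pos.mpr ⟨s, mem_hook_self hf hs⟩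
    omega
  | succ n ih =>
    intro s hs hcard v hv hvs
    obtain ⟨t, ht1, ht2, ht3, ht4⟩ := exists_son hf hv hvs
    have hcomp := mkG_comp hf hc hs hv hvs ht1 ht2 ht3 ht4
    rw [phiF, dif_neg (hook_ne_empty hf hs)]
    rw [rootOf_hook hf hs, hcomp, rootOf_hook hf ht1]
    by_cases hvt : t = v
    · rw [if_pos hvt, ← hvt]
      exact ht3.symm
    · rw [if_neg hvt]
      have hcardt : (hookN V f t).card ≤ n := by
        have := hook_card_lt hf hs ht1 ht2 ht3
        omega
      exact ih t ht1 hcardt v ht4 (fun h => hvt h.symm)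

end MkGConn

section MkGAcyclic
variable {V : Finset ℕ} {f c : ℕ → ℕ} (hf : IsIncTree V f)
  (hc : ∀ v ∈ V.erase (rootOf V), c v ∈ hookN V f v)
include hf hc

/-- a walk whose support avoids `s` but stays in `hook s` remains inside the hook of
a single son of `s` -/
lemma mkG_walk_in_son {s t : ℕ} (hs : s ∈ V) (ht1 : t ∈ V) (ht2 : t ≠ rootOf V)
    (ht3 : f t = s) :
    ∀ {x y : ℕ} (q : (mkG V f c).Walk x y),
      (∀ z ∈ q.support, z ∈ hookN V f s ∧ z ≠ s) → x ∈ hookN V f t →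
      ∀ z ∈ q.support, z ∈ hookN V f t := by
  intro x y q
  induction q with
  | nil =>
    intro hsupp hx z hz
    simp only [SimpleGraph.Walk.support_nil, List.mem_singleton] at hz
    rwa [hz]
  | cons hadj q ih =>
    rename_i u u' w
    intro hsupp hx z hz
    have hu : u ∈ hookN V f s ∧ u ≠ s := hsupp u (SimpleGraph.Walk.start_mem_support _)
    have hu' : u' ∈ hookN V f s ∧ u' ≠ s := by
      apply hsupp
      rw [SimpleGraph.Walk.support_cons]
      exact List.mem_cons_of_mem _ (SimpleGraph.Walk.start_mem_support _)
    obtain ⟨t', ht'1, ht'2, ht'3, hut', hu't'⟩ :=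
      mkG_edge_in_son hf hc hs hadj hu.1 hu.2 hu'.1 hu'.2
    have : t = t' := son_unique hf ⟨ht1, ht2, ht3⟩ ⟨ht'1, ht'2, ht'3⟩ hx hut'
    subst this
    rw [SimpleGraph.Walk.support_cons] at hz
    rcases List.mem_cons.mp hz with rfl | hz
    · exact hx
    · refine ih ?_ hu't' z hz
      intro z' hz'
      exact hsupp z' (by rw [SimpleGraph.Walk.support_cons]; exact List.mem_cons_of_mem _ hz')

omit hf hc in
lemma cycle_support_adj {G : SimpleGraph ℕ} {a x : ℕ} (w : G.Walk a a) (hw : w ≠ SimpleGraph.Walk.nil)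
    (hx : x ∈ w.support) : ∃ y, G.Adj x y := by
  have aux : ∀ {u v : ℕ} (p : G.Walk u v), x ∈ p.support → x = v ∨ ∃ y, G.Adj x y := by
    intro u v p
    induction p with
    | nil => intro h; simp only [SimpleGraph.Walk.support_nil, List.mem_singleton] at h; exact Or.inl h
    | cons hadj p ih =>
      intro h
      rw [SimpleGraph.Walk.support_cons] at h
      rcases List.mem_cons.mp h with rfl | h
      · exact Or.inr ⟨_, hadj⟩
      · exact ih h
  cases w with
  | nil => exact absurd rfl hw
  | cons hadj p =>
    rcases aux _ hx with rfl | h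
    · exact ⟨_, hadj⟩
    · exact h

lemma mkG_acyclic_aux : ∀ n, ∀ s ∈ V, (hookN V f s).card ≤ n →
    ∀ (a : ℕ) (w : (mkG V f c).Walk a a), w.IsCycle →
      ¬(∀ x ∈ w.support, x ∈ hookN V f s) := by
  intro n
  induction n with
  | zero =>
    intro s hs hcard
    have := Finset.card_pos.mpr ⟨s, mem_hook_self hf hs⟩
    omega
  | succ n ih =>
    intro s hs hcard a w hcyc hsupp
    by_cases hmem : s ∈ w.support
    · -- rotate the cycle to start at s
      set w' := w.rotate s hmem with hw'
      have hcyc' : w'.IsCycle := hcyc.rotate hmem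
      have hsupp' : ∀ x ∈ w'.support, x ∈ hookN V f s := by
        intro x hx
        rw [SimpleGraph.Walk.support_eq_cons] at hx
        rcases List.mem_cons.mp hx with rfl | hx
        · exact hsupp _ hmem
        · have : x ∈ w.support.tail :=
            (List.IsRotated.mem_iff (SimpleGraph.Walk.support_rotate w s hmem)).mp hx
          exact hsupp x (List.mem_of_mem_tail this)
      clear_value w'
      clear hw' hcyc hsupp hmem
      cases w' with
      | nil => exact hcyc'.ne_nil rfl
      | cons hadj p =>
        rename_i b
        rw [SimpleGraph.Walk.cons_isCycle_iff] at hcyc'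
        obtain ⟨hpath, hedge⟩ := hcyc'
        have hbs : s ≠ b := fun h => by subst h; exact (mkG V f c).irrefl hadj
        have hbhook : b ∈ hookN V f s := by
          apply hsupp'
          rw [SimpleGraph.Walk.support_cons]
          exact List.mem_cons_of_mem _ (SimpleGraph.Walk.start_mem_support _)
        obtain ⟨t₁, ht₁1, ht₁2, ht₁3, hbct₁⟩ := mkG_edge_at_root hf hc hs hadj hbhook
        -- reverse path q : s → b
        have hqpath : p.reverse.IsPath := hpath.reverse
        obtain ⟨b₂, h₂, q₂, hq⟩ := SimpleGraph.Walk.exists_eq_cons_of_ne hbs p.reverse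
        have hb₂hook : b₂ ∈ hookN V f s := by
          have : b₂ ∈ p.reverse.support := by
            rw [hq, SimpleGraph.Walk.support_cons]
            exact List.mem_cons_of_mem _ (SimpleGraph.Walk.start_mem_support _)
          rw [SimpleGraph.Walk.support_reverse, List.mem_reverse] at this
          apply hsupp'
          rw [SimpleGraph.Walk.support_cons]
          exact List.mem_cons_of_mem _ this
        obtain ⟨t₂, ht₂1, ht₂2, ht₂3, hb₂ct₂⟩ := mkG_edge_at_root hf hc hs h₂ hb₂hook
        -- s ∉ q₂.support
        have hsq₂ : s ∉ q₂.support := by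
          have := hqpath.support_nodup
          rw [hq, SimpleGraph.Walk.support_cons] at this
          exact (List.nodup_cons.mp this).1
        have hq₂supp : ∀ z ∈ q₂.support, z ∈ hookN V f s ∧ z ≠ s := by
          intro z hz
          have hzp : z ∈ p.reverse.support := by
            rw [hq, SimpleGraph.Walk.support_cons]
            exact List.mem_cons_of_mem _ hz
          rw [SimpleGraph.Walk.support_reverse, List.mem_reverse] at hzp
          refine ⟨hsupp' z ?_, fun h => hsq₂ (h ▸ hz)⟩
          rw [SimpleGraph.Walk.support_cons]
          exact List.mem_cons_of_mem _ hzp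
        have hb₂t₂ : b₂ ∈ hookN V f t₂ := by
          rw [hb₂ct₂]
          exact hc t₂ (Finset.mem_erase.mpr ⟨ht₂2, ht₂1⟩)
        have hbt₂ : b ∈ hookN V f t₂ :=
          mkG_walk_in_son hf hc hs ht₂1 ht₂2 ht₂3 q₂ hq₂supp hb₂t₂ b
            (SimpleGraph.Walk.end_mem_support _)
        have hbt₁ : b ∈ hookN V f t₁ := by
          rw [hbct₁]
          exact hc t₁ (Finset.mem_erase.mpr ⟨ht₁2, ht₁1⟩)
        have ht12 : t₁ = t₂ := son_unique hf ⟨ht₁1, ht₁2, ht₁3⟩ ⟨ht₂1, ht₂2, ht₂3⟩ hbt₁ hbt₂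
        have hbb₂ : b = b₂ := by rw [hbct₁, hb₂ct₂, ht12]
        -- then the edge s(s,b) occurs in p, contradiction
        apply hedge
        have : s(s, b₂) ∈ p.reverse.edges := by
          rw [hq, SimpleGraph.Walk.edges_cons]
          exact List.mem_cons_self
        rw [SimpleGraph.Walk.edges_reverse, List.mem_reverse] at this
        rw [← hbb₂] at this; exact this
    · -- cycle avoids s: it lies within the hook of a son of s
      have ha : a ∈ hookN V f s := hsupp a (SimpleGraph.Walk.start_mem_support _)
      have has : a ≠ s := fun h => hmem (h ▸ SimpleGraph.Walk.start_mem_support w)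
      obtain ⟨t, ht1, ht2, ht3, ht4⟩ := exists_son hf ha has
      have hsupp' : ∀ z ∈ w.support, z ∈ hookN V f s ∧ z ≠ s :=
        fun z hz => ⟨hsupp z hz, fun h => hmem (h ▸ hz)⟩
      have hsuppt : ∀ z ∈ w.support, z ∈ hookN V f t :=
        mkG_walk_in_son hf hc hs ht1 ht2 ht3 w hsupp' ht4
      have hcardt : (hookN V f t).card ≤ n := by
        have := hook_card_lt hf hs ht1 ht2 ht3
        omega
      exact ih t ht1 hcardt a w hcyc hsuppt

lemma mkG_acyclic (hV : V.Nonempty) : (mkG V f c).IsAcyclic := by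
  intro a w hcyc
  have hsupp : ∀ x ∈ w.support, x ∈ hookN V f (rootOf V) := by
    rw [hook_root_eq hf hV]
    intro x hx
    obtain ⟨y, hy⟩ := cycle_support_adj w hcyc.ne_nil hx
    exact (mkG_adj_mem hf hc hy).1
  exact mkG_acyclic_aux hf hc _ (rootOf V) (rootOf_mem hV) (le_refl _) a w hcyc hsupp

lemma mkG_cayley (hV : V.Nonempty) : IsCayleyOn V (mkG V f c) := by
  refine ⟨fun a b h => mkG_adj_mem hf hc h, mkG_acyclic hf hc hV, ?_⟩
  intro a ha b hb
  have h1 := mkG_conn hf hc _ (rootOf V) (rootOf_mem hV) (le_refl _) a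
  have h2 := mkG_conn hf hc _ (rootOf V) (rootOf_mem hV) (le_refl _) b
  rw [hook_root_eq hf hV] at h1 h2
  exact (h1 ha).trans (h2 hb).symm

lemma mkG_phi_top (hV : V.Nonempty) :
    ∀ v ∈ V, v ≠ rootOf V → phiF (mkG V f c) V v = f v := by
  intro v hv hvr
  have := mkG_phi hf hc (hookN V f (rootOf V)).card (rootOf V) (rootOf_mem hV) (le_refl _) v
  rw [hook_root_eq hf hV] at this
  exact this hv hvr

end MkGAcyclic

/-- the connected component of `v` inside the vertex set `R` -/
noncomputable def compIn (G : SimpleGraph ℕ) (R : Finset ℕ) (v : ℕ) : Finset ℕ :=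
  R.filter (fun u => ReachIn G R v u)

lemma mem_compIn {G : SimpleGraph ℕ} {R : Finset ℕ} {v u : ℕ} :
    u ∈ compIn G R v ↔ u ∈ R ∧ ReachIn G R v u := Finset.mem_filter

lemma mem_compIn_self {G : SimpleGraph ℕ} {R : Finset ℕ} {v : ℕ} (hv : v ∈ R) :
    v ∈ compIn G R v := mem_compIn.mpr ⟨hv, Relation.ReflTransGen.refl⟩

lemma compIn_congr {G : SimpleGraph ℕ} {R : Finset ℕ} {u v : ℕ}
    (hu : u ∈ compIn G R v) : compIn G R u = compIn G R v := by
  obtain ⟨huR, hR⟩ := mem_compIn.mp hu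
  ext x
  simp only [mem_compIn]
  exact ⟨fun ⟨hx, h⟩ => ⟨hx, hR.trans h⟩, fun ⟨hx, h⟩ => ⟨hx, hR.symm.trans h⟩⟩

lemma phiF_unfold {G : SimpleGraph ℕ} {S : Finset ℕ} (v : ℕ) (hS : S ≠ ∅) :
    phiF G S v = if rootOf (compIn G (S.erase (rootOf S)) v) = v then rootOf S
      else phiF G (compIn G (S.erase (rootOf S)) v) v := by
  rw [phiF, dif_neg hS]
  rfl

lemma phi_mem {G : SimpleGraph ℕ} : ∀ n (S : Finset ℕ), S.card ≤ n → ∀ v ∈ S, v ≠ rootOf S →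
    phiF G S v ∈ S ∧ phiF G S v < v := by
  intro n
  induction n with
  | zero =>
    intro S hcard v hv
    have := Finset.card_pos.mpr ⟨v, hv⟩
    omega
  | succ n ih =>
    intro S hcard v hv hvr
    have hSne : S ≠ ∅ := fun h => by simp [h] at hv
    have hrS : rootOf S ∈ S := rootOf_mem (Finset.nonempty_iff_ne_empty.mpr hSne)
    have hvC : v ∈ compIn G (S.erase (rootOf S)) v :=
      mem_compIn_self (Finset.mem_erase.mpr ⟨hvr, hv⟩)
    rw [phiF_unfold v hSne]
    by_cases h : rootOf (compIn G (S.erase (rootOf S)) v) = v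
    · rw [if_pos h]
      exact ⟨hrS, lt_of_le_of_ne (rootOf_le hv) (Ne.symm hvr)⟩
    · rw [if_neg h]
      have hcard' : (compIn G (S.erase (rootOf S)) v).card ≤ n := by
        have h1 : (compIn G (S.erase (rootOf S)) v).card ≤ (S.erase (rootOf S)).card :=
          Finset.card_le_card (Finset.filter_subset _ _)
        have h2 : (S.erase (rootOf S)).card < S.card := Finset.card_erase_lt_of_mem hrS
        omega
      have hres := ih _ hcard' v hvC (fun hh => h hh.symm)
      have hCS : (compIn G (S.erase (rootOf S)) v) ⊆ S :=
        (Finset.filter_subset _ _).trans (Finset.erase_subset _ _)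
      exact ⟨hCS hres.1, hres.2⟩

section Surj
variable {V : Finset ℕ} {f : ℕ → ℕ} {G : SimpleGraph ℕ} (hf : IsIncTree V f)
include hf

/-- Step 1 of surjectivity: assuming `φ(G) = T` on `hook s`, the `G`-component of `v` in
`hook s − s` is the hook of the son of `s` whose hook contains `v`. -/
lemma surj_comp_eq_hook {s : ℕ} (hs : s ∈ V)
    (hb : ∀ v ∈ hookN V f s, v ≠ s → phiF G (hookN V f s) v = f v)
    {v t : ℕ} (hv : v ∈ hookN V f s) (hvs : v ≠ s)
    (ht1 : t ∈ V) (ht2 : t ≠ rootOf V) (ht3 : f t = s) (hvt : v ∈ hookN V f t) :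
    compIn G ((hookN V f s).erase s) v = hookN V f t := by
  have hSne : hookN V f s ≠ ∅ := hook_ne_empty hf hs
  have hrootS : rootOf (hookN V f s) = s := rootOf_hook hf hs
  -- α : behaviour of the father function on members of R
  have halpha : ∀ u ∈ (hookN V f s).erase s,
      (rootOf (compIn G ((hookN V f s).erase s) u) = u → f u = s) ∧
      (rootOf (compIn G ((hookN V f s).erase s) u) ≠ u →
        f u ∈ compIn G ((hookN V f s).erase s) u ∧ f u < u) := by
    intro u huR
    obtain ⟨hus, huS⟩ := Finset.mem_erase.mp huR
    have hphi : phiF G (hookN V f s) u = f u := hb u huS hus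
    rw [phiF_unfold u hSne, hrootS] at hphi
    constructor
    · intro h; rw [if_pos h] at hphi; exact hphi.symm
    · intro h
      rw [if_neg h] at hphi
      have huC : u ∈ compIn G ((hookN V f s).erase s) u := mem_compIn_self huR
      have := phi_mem (G := G) _ _ (le_refl (compIn G ((hookN V f s).erase s) u).card) u huC
        (fun hh => h hh.symm)
      rw [hphi] at this
      exact this
  have hvR : v ∈ (hookN V f s).erase s := Finset.mem_erase.mpr ⟨hvs, hv⟩
  have hvC : v ∈ compIn G ((hookN V f s).erase s) v := mem_compIn_self hvR
  set C := compIn G ((hookN V f s).erase s) v with hCdef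
  set m := rootOf C with hm
  have hmC : m ∈ C := rootOf_mem ⟨v, hvC⟩
  have hCR : C ⊆ (hookN V f s).erase s := Finset.filter_subset _ _
  have hmR : m ∈ (hookN V f s).erase s := hCR hmC
  obtain ⟨hms, hmS⟩ := Finset.mem_erase.mp hmR
  have hmV : m ∈ V := mem_of_mem_hook hmS
  have hms_lt : s < m := lt_of_le_of_ne (le_of_mem_hook hf hmS) (Ne.symm hms)
  have hmroot : m ≠ rootOf V := by
    have := rootOf_le hs
    omega
  have hfm : f m = s := by
    apply (halpha m hmR).1
    rw [compIn_congr hmC, ← hCdef, ← hm]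
  -- Claim A : C ⊆ hook m
  have hA : ∀ u, u ∈ C → u ∈ hookN V f m := by
    intro u
    induction u using Nat.strong_induction_on with
    | _ u ih =>
      intro huC
      by_cases hum : u = m
      · rw [hum]; exact mem_hook_self hf hmV
      · have huR := hCR huC
        have hcomp_u : compIn G ((hookN V f s).erase s) u = C := compIn_congr huC
        have hα := (halpha u huR).2 (by rw [hcomp_u, ← hm]; exact Ne.symm hum)
        obtain ⟨hfuC, hfult⟩ := hα
        rw [hcomp_u] at hfuC
        have hfum : f u ∈ hookN V f m := ih (f u) hfult hfuC
        simp only [hookN, Finset.mem_filter] at hfum ⊢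
        obtain ⟨h1, k, hk⟩ := hfum
        have huV : u ∈ V := mem_of_mem_hook (Finset.mem_erase.mp huR).2
        exact ⟨huV, k + 1, by rw [Function.iterate_add_apply, Function.iterate_one]; exact hk⟩
  -- Claim B : hook m ⊆ C
  have hB : ∀ k u, u ∈ V → f^[k] u = m → u ∈ C := by
    intro k
    induction k with
    | zero =>
      intro u huV hk
      rw [Function.iterate_zero_apply] at hk
      rw [hk]; exact hmC
    | succ k ih =>
      intro u huV hk
      by_cases hum : u = m
      · rw [hum]; exact hmC
      · rw [Function.iterate_succ_apply] at hk
        have hfuC : f u ∈ C := ih (f u) (f_mem hf huV) hk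
        have humem : u ∈ hookN V f m := by
          simp only [hookN, Finset.mem_filter]
          exact ⟨huV, k + 1, by
            rw [Function.iterate_add_apply, Function.iterate_one]; exact hk⟩
        have huS : u ∈ hookN V f s := hook_trans hf humem hmS
        have hus : u ≠ s := by
          have := le_of_mem_hook hf humem
          omega
        have huR : u ∈ (hookN V f s).erase s := Finset.mem_erase.mpr ⟨hus, huS⟩
        have hfus : f u ≠ s := fun h => (Finset.mem_erase.mp (hCR hfuC)).1 h
        have hne : rootOf (compIn G ((hookN V f s).erase s) u) ≠ u := by
          intro h
          exact hfus ((halpha u huR).1 h)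
        obtain ⟨hfu_comp, -⟩ := (halpha u huR).2 hne
        have h1 : compIn G ((hookN V f s).erase s) (f u)
            = compIn G ((hookN V f s).erase s) u := compIn_congr hfu_comp
        have h2 : compIn G ((hookN V f s).erase s) (f u) = C := compIn_congr hfuC
        have huu : u ∈ compIn G ((hookN V f s).erase s) u := mem_compIn_self huR
        rw [← h1, h2] at huu
        exact huu
  have hCeq : C = hookN V f m := by
    apply Finset.Subset.antisymm
    · intro u hu; exact hA u hu
    · intro u hu
      simp only [hookN, Finset.mem_filter] at hu
      obtain ⟨huV, k, hk⟩ := hu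
      exact hB k u huV hk
  have hmt : m = t := son_unique hf ⟨hmV, hmroot, hfm⟩ ⟨ht1, ht2, ht3⟩ (hCeq ▸ hvC) hvt
  rw [hCdef] at hCeq
  show compIn G ((hookN V f s).erase s) v = hookN V f t
  rw [hCeq, hmt]

lemma surj_reach_restrict {s t : ℕ} (hs : s ∈ V)
    (hb : ∀ v ∈ hookN V f s, v ≠ s → phiF G (hookN V f s) v = f v)
    (ht1 : t ∈ V) (ht2 : t ≠ rootOf V) (ht3 : f t = s) :
    ∀ x y, ReachIn G ((hookN V f s).erase s) x y → x ∈ hookN V f t →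
      y ∈ hookN V f t ∧ ReachIn G (hookN V f t) x y := by
  intro x y hreach hx
  induction hreach with
  | refl => exact ⟨hx, Relation.ReflTransGen.refl⟩
  | tail hr hstep ih =>
    rename_i x' y'
    obtain ⟨hadj, hx'R, hy'R⟩ := hstep
    obtain ⟨hx't, hrt⟩ := ih
    obtain ⟨hx's, hx'S⟩ := Finset.mem_erase.mp hx'R
    have hcomp : compIn G ((hookN V f s).erase s) x' = hookN V f t :=
      surj_comp_eq_hook hf hs hb hx'S hx's ht1 ht2 ht3 hx't
    have hy't : y' ∈ hookN V f t := by
      rw [← hcomp]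
      exact mem_compIn.mpr ⟨hy'R, Relation.ReflTransGen.single ⟨hadj, hx'R, hy'R⟩⟩
    exact ⟨hy't, hrt.tail ⟨hadj, hx't, hy't⟩⟩

lemma surj_hb_son {s t : ℕ} (hs : s ∈ V)
    (hb : ∀ v ∈ hookN V f s, v ≠ s → phiF G (hookN V f s) v = f v)
    (ht1 : t ∈ V) (ht2 : t ≠ rootOf V) (ht3 : f t = s) :
    ∀ v ∈ hookN V f t, v ≠ t → phiF G (hookN V f t) v = f v := by
  intro v hvt hvnet
  have hts : s < t := son_gt hf ht1 ht2 ht3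
  have hvS : v ∈ hookN V f s := hook_sub_of_son hf ht1 ht3 hvt
  have hvs : v ≠ s := by
    have := le_of_mem_hook hf hvt
    omega
  have hphi := hb v hvS hvs
  rw [phiF_unfold v (hook_ne_empty hf hs), rootOf_hook hf hs] at hphi
  rw [surj_comp_eq_hook hf hs hb hvS hvs ht1 ht2 ht3 hvt, rootOf_hook hf ht1] at hphi
  rw [if_neg (fun h => hvnet h.symm)] at hphi
  exact hphi

lemma surj_cn_son {s t : ℕ} (hs : s ∈ V)
    (hb : ∀ v ∈ hookN V f s, v ≠ s → phiF G (hookN V f s) v = f v)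
    (ht1 : t ∈ V) (ht2 : t ≠ rootOf V) (ht3 : f t = s) :
    ∀ a ∈ hookN V f t, ReachIn G (hookN V f t) a t := by
  intro a hat
  have hts : s < t := son_gt hf ht1 ht2 ht3
  have haS : a ∈ hookN V f s := hook_sub_of_son hf ht1 ht3 hat
  have has : a ≠ s := by
    have := le_of_mem_hook hf hat
    omega
  have hcomp : compIn G ((hookN V f s).erase s) a = hookN V f t :=
    surj_comp_eq_hook hf hs hb haS has ht1 ht2 ht3 hat
  have htmem : t ∈ compIn G ((hookN V f s).erase s) a := by
    rw [hcomp]; exact mem_hook_self hf ht1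
  exact (surj_reach_restrict hf hs hb ht1 ht2 ht3 a t (mem_compIn.mp htmem).2 hat).2

lemma surj_exists_edge {s t : ℕ} (hs : s ∈ V)
    (hb : ∀ v ∈ hookN V f s, v ≠ s → phiF G (hookN V f s) v = f v)
    (hcn : ∀ a ∈ hookN V f s, ReachIn G (hookN V f s) a s)
    (ht1 : t ∈ V) (ht2 : t ≠ rootOf V) (ht3 : f t = s) :
    ∃ u, u ∈ hookN V f t ∧ G.Adj s u := by
  have hts : s < t := son_gt hf ht1 ht2 ht3
  have htS : t ∈ hookN V f s := son_mem_hook hf ht1 ht3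
  have hreach : ReachIn G (hookN V f s) t s := hcn t htS
  have key : ∀ y, ReachIn G (hookN V f s) t y →
      y ∈ hookN V f t ∨ ∃ u, u ∈ hookN V f t ∧ G.Adj s u := by
    intro y hy
    induction hy with
    | refl => exact Or.inl (mem_hook_self hf ht1)
    | tail hr hstep ih =>
      rename_i x y'
      obtain ⟨hadj, hxS, hy'S⟩ := hstep
      rcases ih with hxt | hex
      · by_cases hy's : y' = s
        · subst hy's
          exact Or.inr ⟨x, hxt, hadj.symm⟩
        · have hxs : x ≠ s := by
            have := le_of_mem_hook hf hxt
            omega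
          have hcomp : compIn G ((hookN V f s).erase s) x = hookN V f t :=
            surj_comp_eq_hook hf hs hb hxS hxs ht1 ht2 ht3 hxt
          refine Or.inl ?_
          rw [← hcomp]
          refine mem_compIn.mpr ⟨Finset.mem_erase.mpr ⟨hy's, hy'S⟩, ?_⟩
          exact Relation.ReflTransGen.single
            ⟨hadj, Finset.mem_erase.mpr ⟨hxs, hxS⟩, Finset.mem_erase.mpr ⟨hy's, hy'S⟩⟩
      · exact Or.inr hex
  rcases key s hreach with hst | hex
  · have := le_of_mem_hook hf hst
    omega
  · exact hex

lemma surj_unique_edge (hG : G.IsAcyclic) {t s' : ℕ} (ht : t ∈ V) (hs' : s' ∉ hookN V f t)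
    (hcnt : ∀ a ∈ hookN V f t, ReachIn G (hookN V f t) a t)
    {u u' : ℕ} (hu : u ∈ hookN V f t) (hu' : u' ∈ hookN V f t)
    (hadj : G.Adj s' u) (hadj' : G.Adj s' u') : u = u' := by
  by_contra hne
  have hreach : ReachIn G (hookN V f t) u u' := ((hcnt u hu).trans (hcnt u' hu').symm)
  obtain ⟨w, hw⟩ := hreach.exists_walk hu
  set p := w.bypass with hp
  have hppath : p.IsPath := w.bypass_isPath
  have hpsupp : ∀ z ∈ p.support, z ∈ hookN V f t :=
    fun z hz => hw z (w.support_bypass_subset hz)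
  have hs'p : s' ∉ p.support := fun h => hs' (hpsupp s' h)
  -- build the closed walk s' → u → u' → s'
  have hq : (p.concat hadj'.symm).IsPath := by
    rw [← SimpleGraph.Walk.isPath_reverse_iff, SimpleGraph.Walk.reverse_concat]
    rw [SimpleGraph.Walk.cons_isPath_iff]
    refine ⟨hppath.reverse, ?_⟩
    rw [SimpleGraph.Walk.support_reverse, List.mem_reverse]
    exact hs'p
  have hedge : s(s', u) ∉ (p.concat hadj'.symm).edges := by
    rw [SimpleGraph.Walk.edges_concat, List.concat_eq_append]
    intro hmem
    rcases List.mem_append.mp hmem with hmem | hmem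
    · exact hs'p (SimpleGraph.Walk.fst_mem_support_of_mem_edges p hmem)
    · rw [List.mem_singleton, Sym2.eq_iff] at hmem
      rcases hmem with ⟨h1, h2⟩ | ⟨h1, h2⟩
      · exact hs' (h1 ▸ hu')
      · exact hne h2
  have hcyc : (SimpleGraph.Walk.cons hadj (p.concat hadj'.symm)).IsCycle :=
    (SimpleGraph.Walk.cons_isCycle_iff _ _).mpr ⟨hq, hedge⟩
  exact hG _ hcyc

lemma surj_main (hG : G.IsAcyclic) : ∀ n, ∀ s ∈ V, (hookN V f s).card ≤ n →
    (∀ v ∈ hookN V f s, v ≠ s → phiF G (hookN V f s) v = f v) →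
    (∀ a ∈ hookN V f s, ReachIn G (hookN V f s) a s) →
    (∀ v ∈ hookN V f s, v ≠ s → ∃! u, u ∈ hookN V f v ∧ G.Adj (f v) u) ∧
    (∀ a b, G.Adj a b → a ∈ hookN V f s → b ∈ hookN V f s →
      ∃ v, v ∈ hookN V f s ∧ v ≠ s ∧
        ((a = f v ∧ b ∈ hookN V f v) ∨ (b = f v ∧ a ∈ hookN V f v))) := by
  intro n
  induction n with
  | zero =>
    intro s hs hcard
    have := Finset.card_pos.mpr ⟨s, mem_hook_self hf hs⟩
    omega
  | succ n ih =>
    intro s hs hcard hb hcn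
    have hrec : ∀ t, t ∈ V → t ≠ rootOf V → f t = s →
        (∀ v ∈ hookN V f t, v ≠ t → ∃! u, u ∈ hookN V f v ∧ G.Adj (f v) u) ∧
        (∀ a b, G.Adj a b → a ∈ hookN V f t → b ∈ hookN V f t →
          ∃ v, v ∈ hookN V f t ∧ v ≠ t ∧
            ((a = f v ∧ b ∈ hookN V f v) ∨ (b = f v ∧ a ∈ hookN V f v))) := by
      intro t ht1 ht2 ht3
      have hcardt : (hookN V f t).card ≤ n := by
        have := hook_card_lt hf hs ht1 ht2 ht3
        omega
      exact ih t ht1 hcardt (surj_hb_son hf hs hb ht1 ht2 ht3)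
        (surj_cn_son hf hs hb ht1 ht2 ht3)
    constructor
    · -- (I)
      intro v hv hvs
      obtain ⟨t, ht1, ht2, ht3, hvt⟩ := exists_son hf hv hvs
      by_cases hvteq : v = t
      · subst hvteq
        obtain ⟨u, hu1, hu2⟩ := surj_exists_edge hf hs hb hcn ht1 ht2 ht3
        refine ⟨u, ⟨hu1, ht3.symm ▸ hu2⟩, ?_⟩
        rintro u' ⟨hu'1, hu'2⟩
        have hs'notin : s ∉ hookN V f v := by
          intro h
          have h1 := le_of_mem_hook hf h
          have h2 := son_gt hf ht1 ht2 ht3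
          omega
        refine surj_unique_edge hf hG ht1 hs'notin
          (surj_cn_son hf hs hb ht1 ht2 ht3) hu'1 hu1 (ht3 ▸ hu'2) hu2
      · exact (hrec t ht1 ht2 ht3).1 v hvt hvteq
    · -- (II)
      intro a b hadj ha hb'
      have hanb : a ≠ b := hadj.ne
      by_cases has : a = s
      · subst has
        have hbs : b ≠ a := fun h => hanb h.symm
        obtain ⟨t, ht1, ht2, ht3, hbt⟩ := exists_son hf hb' hbs
        refine ⟨t, son_mem_hook hf ht1 ht3, ?_, Or.inl ⟨ht3.symm, hbt⟩⟩
        have := son_gt hf ht1 ht2 ht3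
        omega
      · by_cases hbs : b = s
        · subst hbs
          obtain ⟨t, ht1, ht2, ht3, hat⟩ := exists_son hf ha has
          refine ⟨t, son_mem_hook hf ht1 ht3, ?_, Or.inr ⟨ht3.symm, hat⟩⟩
          have := son_gt hf ht1 ht2 ht3
          omega
        · -- both inside: they lie in a common son hook
          obtain ⟨t, ht1, ht2, ht3, hat⟩ := exists_son hf ha has
          have hcomp : compIn G ((hookN V f s).erase s) a = hookN V f t :=
            surj_comp_eq_hook hf hs hb ha has ht1 ht2 ht3 hat
          have hbt : b ∈ hookN V f t := by
            rw [← hcomp]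
            refine mem_compIn.mpr ⟨Finset.mem_erase.mpr ⟨hbs, hb'⟩, ?_⟩
            exact Relation.ReflTransGen.single
              ⟨hadj, Finset.mem_erase.mpr ⟨has, ha⟩, Finset.mem_erase.mpr ⟨hbs, hb'⟩⟩
          obtain ⟨v, hv1, hv2, hv3⟩ := (hrec t ht1 ht2 ht3).2 a b hadj hat hbt
          refine ⟨v, hook_sub_of_son hf ht1 ht3 hv1, ?_, hv3⟩
          have h1 := le_of_mem_hook hf hv1
          have h2 := son_gt hf ht1 ht2 ht3
          omega

end Surj

section Weight
open MvPolynomial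
variable {V : Finset ℕ} {f c : ℕ → ℕ} (hf : IsIncTree V f)
  (hc : ∀ v ∈ V.erase (rootOf V), c v ∈ hookN V f v)
include hf hc

lemma mkG_deg {v : ℕ} (hv : v ∈ V) :
    degIn V (mkG V f c) v =
      ((V.erase (rootOf V)).filter (fun v' => f v' = v)).card +
      ((V.erase (rootOf V)).filter (fun v' => c v' = v)).card := by
  have hdisj : Disjoint ((V.erase (rootOf V)).filter (fun v' => f v' = v))
      ((V.erase (rootOf V)).filter (fun v' => c v' = v)) := by
    rw [Finset.disjoint_left]
    intro x hx1 hx2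
    obtain ⟨hxm, hxf⟩ := Finset.mem_filter.mp hx1
    obtain ⟨-, hxc⟩ := Finset.mem_filter.mp hx2
    have := mk_f_lt_c hf hc hxm
    omega
  rw [← Finset.card_union_of_disjoint hdisj, ← Finset.filter_or]
  unfold degIn
  apply Finset.card_bij
    (i := fun u hu => Classical.choose ((mkG_adj hf hc).mp (Finset.mem_filter.mp hu).2))
  · intro u hu
    have hadj := (Finset.mem_filter.mp hu).2
    obtain ⟨hw, he⟩ := Classical.choose_spec ((mkG_adj hf hc).mp hadj)
    refine Finset.mem_filter.mpr ⟨hw, ?_⟩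
    rcases Sym2.eq_iff.mp he with ⟨h1, h2⟩ | ⟨h1, h2⟩
    · exact Or.inl h1.symm
    · exact Or.inr h1.symm
  · intro u hu u' hu' heq
    have hadj := (Finset.mem_filter.mp hu).2
    have hadj' := (Finset.mem_filter.mp hu').2
    have hspec := Classical.choose_spec ((mkG_adj hf hc).mp hadj)
    have hspec' := Classical.choose_spec ((mkG_adj hf hc).mp hadj')
    have h3 : s(v, u) = s(v, u') := hspec.2.trans (by rw [heq, ← hspec'.2])
    exact Sym2.congr_right.mp h3
  · intro v' hv'
    obtain ⟨hv'm, hor⟩ := Finset.mem_filter.mp hv'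
    have hedge : ∀ u, s(v, u) = s(f v', c v') → (mkG V f c).Adj v u :=
      fun u he => (mkG_adj hf hc).mpr ⟨v', hv'm, he⟩
    rcases hor with hfe | hce
    · -- v = f v', take u = c v'
      have he : s(v, c v') = s(f v', c v') := by rw [hfe]
      have hadj : (mkG V f c).Adj v (c v') := hedge _ he
      have hmem : c v' ∈ V.filter (fun u => (mkG V f c).Adj v u) :=
        Finset.mem_filter.mpr ⟨mem_of_mem_hook (hc v' hv'm), hadj⟩
      refine ⟨c v', hmem, ?_⟩
      obtain ⟨hw, hwe⟩ := Classical.choose_spec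
        ((mkG_adj hf hc).mp (Finset.mem_filter.mp hmem).2)
      exact mkG_edge_inj hf hc hw hv'm (hwe.symm.trans he)
    · -- v = c v', take u = f v'
      have he : s(v, f v') = s(f v', c v') := by rw [hce, Sym2.eq_swap]
      have hadj : (mkG V f c).Adj v (f v') := hedge _ he
      have hmem : f v' ∈ V.filter (fun u => (mkG V f c).Adj v u) :=
        Finset.mem_filter.mpr ⟨f_mem hf (Finset.mem_erase.mp hv'm).2, hadj⟩
      refine ⟨f v', hmem, ?_⟩
      obtain ⟨hw, hwe⟩ := Classical.choose_spec
        ((mkG_adj hf hc).mp (Finset.mem_filter.mp hmem).2)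
      exact mkG_edge_inj hf hc hw hv'm (hwe.symm.trans he)

lemma prod_pow_fiber {g : ℕ → ℕ} (hg : ∀ v' ∈ V.erase (rootOf V), g v' ∈ V) :
    ∏ v ∈ V, (X v : MvPolynomial ℕ ℚ) ^ ((V.erase (rootOf V)).filter (fun v' => g v' = v)).card
      = ∏ v' ∈ V.erase (rootOf V), (X (g v') : MvPolynomial ℕ ℚ) := by
  rw [← Finset.prod_fiberwise_of_maps_to hg (fun v' => (X (g v') : MvPolynomial ℕ ℚ))]
  refine Finset.prod_congr rfl (fun v hv => ?_)
  rw [Finset.prod_congr rfl (fun v' hv' => by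
    rw [(Finset.mem_filter.mp hv').2] : ∀ v' ∈ (V.erase (rootOf V)).filter (fun v' => g v' = v),
      (X (g v') : MvPolynomial ℕ ℚ) = X v), Finset.prod_const]

lemma mkG_monomial :
    ∏ v ∈ V, (X v : MvPolynomial ℕ ℚ) ^ degIn V (mkG V f c) v
      = ∏ v ∈ V.erase (rootOf V), (X (f v) * X (c v) : MvPolynomial ℕ ℚ) := by
  calc ∏ v ∈ V, (X v : MvPolynomial ℕ ℚ) ^ degIn V (mkG V f c) v
      = ∏ v ∈ V, ((X v : MvPolynomial ℕ ℚ) ^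
          ((V.erase (rootOf V)).filter (fun v' => f v' = v)).card *
          (X v : MvPolynomial ℕ ℚ) ^
          ((V.erase (rootOf V)).filter (fun v' => c v' = v)).card) := by
        refine Finset.prod_congr rfl (fun v hv => ?_)
        rw [mkG_deg hf hc hv, pow_add]
    _ = (∏ v ∈ V, (X v : MvPolynomial ℕ ℚ) ^
          ((V.erase (rootOf V)).filter (fun v' => f v' = v)).card) *
        ∏ v ∈ V, (X v : MvPolynomial ℕ ℚ) ^
          ((V.erase (rootOf V)).filter (fun v' => c v' = v)).card := Finset.prod_mul_distrib
    _ = (∏ v' ∈ V.erase (rootOf V), (X (f v') : MvPolynomial ℕ ℚ)) *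
        ∏ v' ∈ V.erase (rootOf V), (X (c v') : MvPolynomial ℕ ℚ) := by
        rw [prod_pow_fiber hf hc (fun v' hv' => f_mem hf (Finset.mem_erase.mp hv').2),
          prod_pow_fiber hf hc (fun v' hv' => mem_of_mem_hook (hc v' hv'))]
    _ = ∏ v ∈ V.erase (rootOf V), (X (f v) * X (c v) : MvPolynomial ℕ ℚ) :=
        Finset.prod_mul_distrib.symm

end Weight

section Assemble
open MvPolynomial

variable {V : Finset ℕ} {f : ℕ → ℕ}

lemma surj_exists_c {G : SimpleGraph ℕ} (hf : IsIncTree V f) (hV : V.Nonempty)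
    (hG : IsCayleyOn V G) (hphi : ∀ v ∈ V, v ≠ rootOf V → phiF G V v = f v) :
    ∃ c : ℕ → ℕ, (∀ v ∈ V.erase (rootOf V), c v ∈ hookN V f v) ∧ G = mkG V f c := by
  classical
  have hb : ∀ v ∈ hookN V f (rootOf V), v ≠ rootOf V →
      phiF G (hookN V f (rootOf V)) v = f v := by
    rw [hook_root_eq hf hV]; exact hphi
  have hcn : ∀ a ∈ hookN V f (rootOf V), ReachIn G (hookN V f (rootOf V)) a (rootOf V) := by
    rw [hook_root_eq hf hV]
    intro a ha
    exact hG.2.2 a ha (rootOf V) (rootOf_mem hV)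
  obtain ⟨hI, hII⟩ := surj_main hf hG.2.1 _ (rootOf V) (rootOf_mem hV) (le_refl _) hb hcn
  rw [hook_root_eq hf hV] at hI hII
  have hI' : ∀ v, v ∈ V.erase (rootOf V) →
      ∃! u, u ∈ hookN V f v ∧ G.Adj (f v) u := by
    intro v hv
    obtain ⟨hvr, hvV⟩ := Finset.mem_erase.mp hv
    exact hI v hvV hvr
  choose! c hc1 hc2 using fun v hv => (hI' v hv).exists
  have huniq : ∀ v ∈ V.erase (rootOf V), ∀ y, y ∈ hookN V f v ∧ G.Adj (f v) y → y = c v := by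
    intro v hv y hy
    obtain ⟨u, hu, huu⟩ := hI' v hv
    rw [huu y hy, huu (c v) ⟨hc1 v hv, hc2 v hv⟩]
  refine ⟨c, fun v hv => hc1 v hv, ?_⟩
  ext a b
  rw [mkG_adj hf (fun v hv => hc1 v hv)]
  constructor
  · intro hadj
    have haV := (hG.1 a b hadj).1
    have hbV := (hG.1 a b hadj).2
    obtain ⟨v, hv1, hv2, hv3⟩ := hII a b hadj haV hbV
    have hvmem : v ∈ V.erase (rootOf V) := Finset.mem_erase.mpr ⟨hv2, hv1⟩
    rcases hv3 with ⟨ha', hbv⟩ | ⟨hb', hav⟩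
    · have hbc : b = c v := huniq v hvmem b ⟨hbv, ha' ▸ hadj⟩
      exact ⟨v, hvmem, by rw [ha', hbc]⟩
    · have hac : a = c v := huniq v hvmem a ⟨hav, hb' ▸ hadj.symm⟩
      exact ⟨v, hvmem, by rw [hb', hac, Sym2.eq_swap]⟩
  · rintro ⟨v, hvmem, he⟩
    have h1 : G.Adj (f v) (c v) := hc2 v hvmem
    rcases Sym2.eq_iff.mp he with ⟨h2, h3⟩ | ⟨h2, h3⟩
    · rw [h2, h3]; exact h1
    · rw [h2, h3]; exact h1.symm

/-- totalization of a dependent choice function on `V.erase (rootOf V)` -/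
noncomputable def totCh (V : Finset ℕ) (p : ∀ a ∈ V.erase (rootOf V), ℕ) : ℕ → ℕ :=
  fun v => if h : v ∈ V.erase (rootOf V) then p v h else v

lemma totCh_mem {p : ∀ a ∈ V.erase (rootOf V), ℕ}
    (hp : p ∈ (V.erase (rootOf V)).pi (fun v => hookN V f v)) :
    ∀ v ∈ V.erase (rootOf V), totCh V p v ∈ hookN V f v := by
  intro v hv
  rw [totCh, dif_pos hv]
  exact Finset.mem_pi.mp hp v hv

lemma totCh_eq {p : ∀ a ∈ V.erase (rootOf V), ℕ} {v : ℕ} (hv : v ∈ V.erase (rootOf V)) :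
    totCh V p v = p v hv := dif_pos hv

lemma mkG_inj (hf : IsIncTree V f) {p q : ∀ a ∈ V.erase (rootOf V), ℕ}
    (hp : p ∈ (V.erase (rootOf V)).pi (fun v => hookN V f v))
    (hq : q ∈ (V.erase (rootOf V)).pi (fun v => hookN V f v))
    (h : mkG V f (totCh V p) = mkG V f (totCh V q)) : p = q := by
  have hcp := totCh_mem (f := f) hp
  have hcq := totCh_mem (f := f) hq
  funext v hv
  have hadj : (mkG V f (totCh V p)).Adj (f v) (totCh V p v) :=
    (mkG_adj hf hcp).mpr ⟨v, hv, rfl⟩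
  rw [h, mkG_adj hf hcq] at hadj
  obtain ⟨v', hv', he⟩ := hadj
  obtain ⟨hvr, hvV⟩ := Finset.mem_erase.mp hv
  obtain ⟨hv'r, hv'V⟩ := Finset.mem_erase.mp hv'
  have l1 : f v < totCh V p v := mk_f_lt_c hf hcp hv
  have l2 : f v' < totCh V q v' := mk_f_lt_c hf hcq hv'
  rcases Sym2.eq_iff.mp he with ⟨h1, h2⟩ | ⟨h1, h2⟩
  · -- f v = f v', totCh p v = totCh q v'
    have hvv' : v = v' :=
      son_hooks_disjoint hf hvV hv'V hvr hv'r h1 (hcp v hv) (h2 ▸ hcq v' hv')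
    subst hvv'
    rw [← totCh_eq (p := p) hv, ← totCh_eq (p := q) hv]
    exact h2
  · omega

theorem stmt5' (hV : V.Nonempty) (hf : IsIncTree V f) :
    ∑ᶠ (G : SimpleGraph ℕ)
        (_ : IsCayleyOn V G ∧ ∀ v ∈ V, v ≠ rootOf V → phiF G V v = f v),
        ∏ v ∈ V, (MvPolynomial.X v : MvPolynomial ℕ ℚ) ^ degIn V G v
      = ∏ v ∈ V.erase (rootOf V),
          MvPolynomial.X (f v) * ∑ u ∈ hookN V f v, MvPolynomial.X u := by
  classical
  set s0 := V.erase (rootOf V) with hs0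
  set piS := s0.pi (fun v => hookN V f v) with hpiS
  set T : Finset (SimpleGraph ℕ) := piS.image (fun p => mkG V f (totCh V p)) with hT
  have hchar : ∀ G : SimpleGraph ℕ,
      (IsCayleyOn V G ∧ ∀ v ∈ V, v ≠ rootOf V → phiF G V v = f v) ↔ G ∈ T := by
    intro G
    constructor
    · rintro ⟨hG, hphi⟩
      obtain ⟨c, hc, rfl⟩ := surj_exists_c hf hV hG hphi
      rw [hT, Finset.mem_image]
      refine ⟨fun v _ => c v, ?_, ?_⟩
      · rw [hpiS, Finset.mem_pi]
        intro v hv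
        exact hc v hv
      · -- the two graphs agree since totCh agrees with c on s0
        have : ∀ a b, (mkG V f (totCh V (fun v _ => c v))).Adj a b ↔ (mkG V f c).Adj a b := by
          intro a b
          rw [mkG_adj hf (totCh_mem (by rw [Finset.mem_pi]; exact fun v hv => hc v hv)),
            mkG_adj hf hc]
          constructor
          · rintro ⟨v, hv, he⟩
            exact ⟨v, hv, by rwa [totCh_eq hv] at he⟩
          · rintro ⟨v, hv, he⟩
            exact ⟨v, hv, by rwa [totCh_eq hv]⟩
        ext a b
        exact this a b
    · intro hG
      rw [hT, Finset.mem_image] at hG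
      obtain ⟨p, hp, rfl⟩ := hG
      have hcp := totCh_mem (f := f) hp
      exact ⟨mkG_cayley hf hcp hV, mkG_phi_top hf hcp hV⟩
  -- convert the finsum to a finite sum over T
  have h1 : (∑ᶠ (G : SimpleGraph ℕ)
        (_ : IsCayleyOn V G ∧ ∀ v ∈ V, v ≠ rootOf V → phiF G V v = f v),
        ∏ v ∈ V, (MvPolynomial.X v : MvPolynomial ℕ ℚ) ^ degIn V G v)
      = ∑ G ∈ T, ∏ v ∈ V, (MvPolynomial.X v : MvPolynomial ℕ ℚ) ^ degIn V G v := by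
    rw [← finsum_mem_coe_finset]
    rw [finsum_mem_def]
    apply finsum_congr
    intro G
    rw [finsum_eq_if, Set.indicator_apply]
    simp only [Finset.coe_sort_coe, Finset.mem_coe]
    by_cases h : G ∈ T
    · rw [if_pos h, if_pos ((hchar G).mpr h)]
    · rw [if_neg h, if_neg (fun hh => h ((hchar G).mp hh))]
  rw [h1, hT, Finset.sum_image (fun p hp q hq h => mkG_inj hf hp hq h)]
  have h2 : ∀ p ∈ piS, (∏ v ∈ V, (MvPolynomial.X v : MvPolynomial ℕ ℚ) ^
      degIn V (mkG V f (totCh V p)) v)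
      = ∏ x ∈ s0.attach, (MvPolynomial.X (f x.1) * MvPolynomial.X (p x.1 x.2)) := by
    intro p hp
    have hcp := totCh_mem (f := f) hp
    rw [mkG_monomial hf hcp, ← Finset.prod_attach s0
      (fun v => (MvPolynomial.X (f v) * MvPolynomial.X (totCh V p v) : MvPolynomial ℕ ℚ))]
    refine Finset.prod_congr rfl (fun x hx => ?_)
    rw [totCh_eq x.2]
  rw [Finset.sum_congr rfl h2]
  rw [Finset.prod_congr rfl (fun v hv => by
    rw [Finset.mul_sum] :
    ∀ v ∈ s0, (MvPolynomial.X (f v) * ∑ u ∈ hookN V f v, MvPolynomial.X u : MvPolynomial ℕ ℚ)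
      = ∑ u ∈ hookN V f v, MvPolynomial.X (f v) * MvPolynomial.X u)]
  rw [Finset.prod_sum]

end Assemble

/-- For an unordered increasing tree `T` with label set `V` (a finite nonempty set of
positive integers), the sum over all Cayley trees `U` with vertex set `V` such that
`φ(U) = T` of the monomial `∏_{v ∈ V} k_v^{d_v(U)}` equals
`∏_{v ∈ V, v ≠ min V} k_{f(v)} · (Σ_{u ∈ 𝔥_T(v)} k_u)`, in `ℚ[(k_v)_{v ∈ V}]`. -/
theorem stmt5 (V : Finset ℕ) (hV : V.Nonempty) (hpos : ∀ v ∈ V, 0 < v)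
    (f : ℕ → ℕ) (hf : IsIncTree V f) :
    ∑ᶠ (G : SimpleGraph ℕ)
        (_ : IsCayleyOn V G ∧ ∀ v ∈ V, v ≠ rootOf V → phiF G V v = f v),
        ∏ v ∈ V, (MvPolynomial.X v : MvPolynomial ℕ ℚ) ^ degIn V G v
      = ∏ v ∈ V.erase (rootOf V),
          MvPolynomial.X (f v) * ∑ u ∈ hookN V f v, MvPolynomial.X u := by
  exact stmt5' hV hf
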